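/- For positive definite ℓ×ℓ complex matrices X and Y, trace(X # Y) ≤ tgm(X,Y), where X # Y = √X·(X^{-1/2}·Y·X^{-1/2})^{1/2}·√X is the matrix geometric mean. -/

import Mathlib

open Matrix
open scoped ComplexOrder

namespace Matrix.PosSemidef

/-- The positive semidefinite square root of a positive semidefinite matrix -/
noncomputable def sqrt {n : Type*} {𝕜 : Type*} [Fintype n] [RCLike 𝕜] [DecidableEq n]
    {A : Matrix n n 𝕜} (hA : PosSemidef A) : Matrix n n 𝕜 :=
  hA.1.eigenvectorUnitary.1 * diagonal ((↑) ∘ (√·) ∘ hA.1.eigenvalues) *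
  (star hA.1.eigenvectorUnitary : Matrix n n 𝕜)

lemma posSemidef_sqrt {n : Type*} {𝕜 : Type*} [Fintype n] [RCLike 𝕜] [DecidableEq n]
    {A : Matrix n n 𝕜} (hA : PosSemidef A) : PosSemidef hA.sqrt := by
  apply PosSemidef.mul_mul_conjTranspose_same
  refine posSemidef_diagonal_iff.mpr fun i ↦ ?_
  rw [Function.comp_apply, RCLike.nonneg_iff]
  constructor
  · simp only [RCLike.ofReal_re]
    exact Real.sqrt_nonneg _
  · simp only [RCLike.ofReal_im]

end Matrix.PosSemidef

open scoped MatrixOrder in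
lemma Matrix.PosSemidef.sqrt_eq_cfcSqrt {n : Type*} [Fintype n] [DecidableEq n]
    {A : Matrix n n ℂ} (hA : PosSemidef A) : hA.sqrt = CFC.sqrt A := by
  rw [CFC.sqrt_eq_real_sqrt A hA.nonneg, cfcₙ_eq_cfc, hA.1.cfc_eq, IsHermitian.cfc, Unitary.conjStarAlgAut_apply]
  rfl

lemma Matrix.PosSemidef.sqrt_mul_self {n : Type*} [Fintype n] [DecidableEq n]
    {A : Matrix n n ℂ} (hA : PosSemidef A) : hA.sqrt * hA.sqrt = A := by
  rw [hA.sqrt_eq_cfcSqrt]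
  open scoped MatrixOrder in exact CFC.sqrt_mul_sqrt_self A hA.nonneg

lemma Matrix.PosSemidef.eq_sqrt_of_sq_eq {n : Type*} [Fintype n] [DecidableEq n]
    {A B : Matrix n n ℂ} (hA : PosSemidef A) (hB : PosSemidef B) (hAB : A ^ 2 = B) :
    A = hB.sqrt := by
  rw [hB.sqrt_eq_cfcSqrt]
  open scoped MatrixOrder in
  exact ((CFC.sqrt_eq_iff B A hB.nonneg hA.nonneg).mpr (by rw [← hAB, sq])).symm


/-- The product `√X * Y * √X` is positive semidefinite. -/
theorem sqrt_mul_mul_sqrt_posSemidef {n : Type*} [Fintype n] [DecidableEq n]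
    {X Y : Matrix n n ℂ} (hX : X.PosSemidef) (hY : Y.PosSemidef) :
    (hX.sqrt * Y * hX.sqrt).PosSemidef := by
  have h := hY.conjTranspose_mul_mul_same (B := hX.sqrt)
  rwa [hX.posSemidef_sqrt.isHermitian.eq] at h

/-- The tracial geometric mean `tgm(X,Y) = trace √(√X·Y·√X)`. -/
noncomputable def tgm {n : Type*} [Fintype n] [DecidableEq n]
    {X Y : Matrix n n ℂ} (hX : X.PosSemidef) (hY : Y.PosSemidef) : ℝ :=
  ((sqrt_mul_mul_sqrt_posSemidef hX hY).sqrt.trace).re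

/-- The matrix geometric mean `X # Y = √X·(X^{-1/2}·Y·X^{-1/2})^{1/2}·√X`
of positive definite matrices, where `X^{-1/2} = √(X⁻¹)`. -/
noncomputable def matrixGeomMean {ℓ : ℕ} {X Y : Matrix (Fin ℓ) (Fin ℓ) ℂ}
    (hX : X.PosDef) (hY : Y.PosDef) : Matrix (Fin ℓ) (Fin ℓ) ℂ :=
  hX.posSemidef.sqrt *
    (sqrt_mul_mul_sqrt_posSemidef hX.inv.posSemidef hY.posSemidef).sqrt *
    hX.posSemidef.sqrt

/-- **Cauchy–Schwarz** for the Frobenius inner product `⟨A, B⟩ = trace (Aᴴ B)`. -/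
lemma trace_cs {n : Type*} [Fintype n] (A B : Matrix n n ℂ) :
    ‖(Aᴴ * B).trace‖ ≤ Real.sqrt ((Aᴴ * A).trace.re) * Real.sqrt ((Bᴴ * B).trace.re) := by
  have habs : ∀ z : ℂ, ((starRingEnd ℂ) z * z).re = ‖z‖ ^ 2 := fun z => by
    rw [Complex.sq_norm, Complex.normSq_apply, Complex.mul_re, Complex.conj_re, Complex.conj_im]
    ring
  have key : ∀ C D : Matrix n n ℂ,
      (Cᴴ * D).trace = ∑ p : n × n, (starRingEnd ℂ) (C p.2 p.1) * D p.2 p.1 := by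
    intro C D
    rw [Fintype.sum_prod_type]
    simp [Matrix.trace, Matrix.diag, Matrix.mul_apply, Matrix.conjTranspose_apply]
  have keyre : ∀ C : Matrix n n ℂ,
      (Cᴴ * C).trace.re = ∑ p : n × n, ‖C p.2 p.1‖ ^ 2 := by
    intro C
    rw [key, Complex.re_sum]
    exact Finset.sum_congr rfl fun p _ => habs _
  rw [key A B, keyre, keyre]
  calc ‖∑ p : n × n, (starRingEnd ℂ) (A p.2 p.1) * B p.2 p.1‖
      ≤ ∑ p : n × n, ‖(starRingEnd ℂ) (A p.2 p.1) * B p.2 p.1‖ :=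
        norm_sum_le _ _
    _ = ∑ p : n × n, ‖A p.2 p.1‖ * ‖B p.2 p.1‖ := by
        simp [_root_.map_mul]
    _ ≤ _ := Real.sum_mul_le_sqrt_mul_sqrt _ _ _

/-- The real part of the trace of a positive semidefinite matrix is nonnegative. -/
lemma posSemidef_trace_re_nonneg {n : Type*} [Fintype n] [DecidableEq n] {T : Matrix n n ℂ}
    (hT : T.PosSemidef) : 0 ≤ T.trace.re := by
  rw [show T.trace = ∑ i, T i i from rfl, Complex.re_sum]
  refine Finset.sum_nonneg fun i _ => ?_
  have h := hT.re_dotProduct_nonneg (Pi.single i 1)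
  simpa [dotProduct, Matrix.mulVec, Pi.single_apply, Finset.sum_ite_eq,
    dotProduct_single] using h

/-- `Re (trace M) ≤ Re (trace T)` when `Mᴴ M = T²` with `T` psd and everything invertible. -/
lemma re_trace_le_of_sq {n : Type*} [Fintype n] [DecidableEq n] {M T : Matrix n n ℂ}
    (hT : T.PosSemidef) (hdetT : T.det ≠ 0) (hdetM : M.det ≠ 0)
    (hMM : Mᴴ * M = T * T) : M.trace.re ≤ T.trace.re := by
  set U := M * T⁻¹ with hUdef
  have hM : M = U * T := by
    rw [hUdef, Matrix.nonsing_inv_mul_cancel_right _ _ hdetT.isUnit]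
  have hUH : Uᴴ = T⁻¹ * Mᴴ := by
    rw [hUdef, Matrix.conjTranspose_mul, Matrix.conjTranspose_nonsing_inv, hT.isHermitian.eq]
  have hUU : U * Uᴴ = 1 := by
    rw [hUH, hUdef]
    calc M * T⁻¹ * (T⁻¹ * Mᴴ) = M * (T * T)⁻¹ * Mᴴ := by
          rw [Matrix.mul_inv_rev]; noncomm_ring
      _ = M * (Mᴴ * M)⁻¹ * Mᴴ := by rw [hMM]
      _ = M * (M⁻¹ * Mᴴ⁻¹) * Mᴴ := by rw [Matrix.mul_inv_rev]
      _ = (M * M⁻¹) * (Mᴴ⁻¹ * Mᴴ) := by noncomm_ring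
      _ = 1 := by
          rw [Matrix.mul_nonsing_inv _ hdetM.isUnit,
            Matrix.nonsing_inv_mul _ (by simpa [Matrix.det_conjTranspose] using hdetM.isUnit.star)]
          simp
  set R := hT.sqrt with hRdef
  have hR2 : R * R = T := hT.sqrt_mul_self
  have hRH : Rᴴ = R := hT.posSemidef_sqrt.isHermitian.eq
  have htr : M.trace = ((Uᴴ * R)ᴴ * R).trace := by
    rw [Matrix.conjTranspose_mul, Matrix.conjTranspose_conjTranspose, hRH]
    rw [hM, ← hR2, ← Matrix.mul_assoc, Matrix.trace_mul_comm (U * R) R, ← Matrix.mul_assoc]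
  have hcs := trace_cs (Uᴴ * R) R
  rw [← htr] at hcs
  have h1 : (Uᴴ * R)ᴴ * (Uᴴ * R) = T := by
    rw [Matrix.conjTranspose_mul, Matrix.conjTranspose_conjTranspose, hRH]
    calc R * U * (Uᴴ * R) = R * (U * Uᴴ) * R := by noncomm_ring
      _ = T := by rw [hUU, Matrix.mul_one, hR2]
  have h2 : Rᴴ * R = T := by rw [hRH, hR2]
  rw [h1, h2, Real.mul_self_sqrt (posSemidef_trace_re_nonneg hT)] at hcs
  exact le_trans (Complex.re_le_norm _) hcs

/-- Abstract algebraic core: `(S X)ᴴ (S X) = T²` where `S² = A⁻¹ Y A⁻¹`, `T² = A Y A`,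
`A² = X`. -/
lemma geom_sq_eq {n : Type*} [Fintype n] [DecidableEq n] {X Y A S T : Matrix n n ℂ}
    (hXH : Xᴴ = X) (hSH : Sᴴ = S) (hA2 : A * A = X)
    (hS2 : S * S = A⁻¹ * Y * A⁻¹) (hT2 : T * T = A * Y * A)
    (hdetA : A.det ≠ 0) : (S * X)ᴴ * (S * X) = T * T := by
  rw [Matrix.conjTranspose_mul, hXH, hSH, hT2]
  calc X * S * (S * X) = X * (S * S) * X := by noncomm_ring
    _ = (A * A) * (A⁻¹ * Y * A⁻¹) * (A * A) := by rw [hS2, hA2]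
    _ = A * (A * A⁻¹) * Y * (A⁻¹ * A) * A := by noncomm_ring
    _ = A * Y * A := by
        rw [Matrix.mul_nonsing_inv _ hdetA.isUnit, Matrix.nonsing_inv_mul _ hdetA.isUnit]
        noncomm_ring

/-- Abstract form of the main inequality. -/
lemma aux_main {n : Type*} [Fintype n] [DecidableEq n] (X Y A B S T : Matrix n n ℂ)
    (hX : X.PosDef) (hY : Y.PosDef) (hSH : Sᴴ = S) (hTps : T.PosSemidef)
    (hA2 : A * A = X) (hB : B = A⁻¹)
    (hS2 : S * S = B * Y * B) (hT2 : T * T = A * Y * A) :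
    ((A * S * A).trace).re ≤ T.trace.re := by
  subst hB
  have hdetA : A.det ≠ 0 := fun h => hX.det_pos.ne' (by rw [← hA2, Matrix.det_mul, h, mul_zero])
  have hdetAinv : A⁻¹.det ≠ 0 := by
    rw [Matrix.det_nonsing_inv, Ring.inverse_eq_inv']
    exact inv_ne_zero hdetA
  have hdetT : T.det ≠ 0 := by
    intro h
    have h2 : (T * T).det = 0 := by rw [Matrix.det_mul, h, mul_zero]
    rw [hT2, Matrix.det_mul, Matrix.det_mul] at h2
    rcases mul_eq_zero.mp h2 with h3 | h3
    · rcases mul_eq_zero.mp h3 with h4 | h4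
      · exact hdetA h4
      · exact hY.det_pos.ne' h4
    · exact hdetA h3
  have hdetS : S.det ≠ 0 := by
    intro h
    have h2 : (S * S).det = 0 := by rw [Matrix.det_mul, h, mul_zero]
    rw [hS2, Matrix.det_mul, Matrix.det_mul] at h2
    rcases mul_eq_zero.mp h2 with h3 | h3
    · rcases mul_eq_zero.mp h3 with h4 | h4
      · exact hdetAinv h4
      · exact hY.det_pos.ne' h4
    · exact hdetAinv h3
  have hdetM : (S * X).det ≠ 0 := by
    rw [Matrix.det_mul]
    exact mul_ne_zero hdetS hX.det_pos.ne'
  have hMM : (S * X)ᴴ * (S * X) = T * T :=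
    geom_sq_eq hX.isHermitian.eq hSH hA2 hS2 hT2 hdetA
  have hgm : (A * S * A).trace = (S * X).trace := by
    rw [Matrix.trace_mul_cycle, hA2, Matrix.trace_mul_comm]
  rw [hgm]
  exact re_trace_le_of_sq hTps hdetT hdetM hMM

/-- `trace (X # Y) ≤ tgm(X, Y)` for positive definite `X`, `Y`. -/
theorem trace_geomMean_le_tgm {ℓ : ℕ} {X Y : Matrix (Fin ℓ) (Fin ℓ) ℂ}
    (hX : X.PosDef) (hY : Y.PosDef) :
    ((matrixGeomMean hX hY).trace).re ≤ tgm hX.posSemidef hY.posSemidef := by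
  have hB : hX.inv.posSemidef.sqrt = hX.posSemidef.sqrt⁻¹ := by
    refine (Matrix.PosSemidef.eq_sqrt_of_sq_eq hX.posSemidef.posSemidef_sqrt.inv _ ?_).symm
    rw [pow_two, ← Matrix.mul_inv_rev, hX.posSemidef.sqrt_mul_self]
  exact aux_main X Y hX.posSemidef.sqrt hX.inv.posSemidef.sqrt
    (sqrt_mul_mul_sqrt_posSemidef hX.inv.posSemidef hY.posSemidef).sqrt
    (sqrt_mul_mul_sqrt_posSemidef hX.posSemidef hY.posSemidef).sqrt
    hX hY
    (sqrt_mul_mul_sqrt_posSemidef hX.inv.posSemidef hY.posSemidef).posSemidef_sqrt.isHermitian.eq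
    (sqrt_mul_mul_sqrt_posSemidef hX.posSemidef hY.posSemidef).posSemidef_sqrt
    hX.posSemidef.sqrt_mul_self hB
    (Matrix.PosSemidef.sqrt_mul_self _) (Matrix.PosSemidef.sqrt_mul_self _)
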